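/- For every integer n ≥ 1 there exist an instance with n bidders, a deterministic tie-breaking rule, and an FPA equilibrium bid profile whose liquid welfare LW satisfies n · LW ≤ OPT; hence the price of anarchy of the first-price auction with both ROS and budget constraints is at least n. -/

import Mathlib

open Finset
open scoped Classical

noncomputable section

/-- An allocation: each entry in `[0,1]`, and each query allocated total probability at most 1. -/
def IsAlloc {n q : ℕ} (π : Fin n → Fin q → ℝ) : Prop :=
  (∀ i j, 0 ≤ π i j) ∧ (∀ i j, π i j ≤ 1) ∧ ∀ j, ∑ i, π i j ≤ 1

/-- An integral (deterministic) allocation. -/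
def IsIntegralAlloc {n q : ℕ} (π : Fin n → Fin q → ℝ) : Prop :=
  IsAlloc π ∧ ∀ i j, π i j = 0 ∨ π i j = 1

/-- Liquid welfare of an allocation. -/
def allocLW {n q : ℕ} (B : Fin n → ℝ) (v π : Fin n → Fin q → ℝ) : ℝ :=
  ∑ i, min (B i) (∑ j, π i j * v i j)

/-- A deterministic tie-breaking / winner rule for first-price auctions:
given a bid profile, it selects on each query a bidder whose bid is maximal. -/
def IsWinnerRule {n q : ℕ} (W : (Fin n → Fin q → ℝ) → Fin q → Fin n) : Prop :=
  ∀ (b : Fin n → Fin q → ℝ) (j : Fin q) (i : Fin n), b i j ≤ b (W b j) j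

/-- The set of queries bidder `i` wins under bid profile `b`. -/
def fpaN {n q : ℕ} (W : (Fin n → Fin q → ℝ) → Fin q → Fin n)
    (b : Fin n → Fin q → ℝ) (i : Fin n) : Finset (Fin q) :=
  Finset.univ.filter fun j => W b j = i

/-- The total value bidder `i` obtains. -/
def fpaV {n q : ℕ} (v : Fin n → Fin q → ℝ) (W : (Fin n → Fin q → ℝ) → Fin q → Fin n)
    (b : Fin n → Fin q → ℝ) (i : Fin n) : ℝ :=
  ∑ j ∈ fpaN W b i, v i j

/-- The spend (winning bid) on query `j`. -/
def fpaSpendQ {n q : ℕ} (W : (Fin n → Fin q → ℝ) → Fin q → Fin n)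
    (b : Fin n → Fin q → ℝ) (j : Fin q) : ℝ :=
  b (W b j) j

/-- The total spend of bidder `i`. -/
def fpaSpendI {n q : ℕ} (W : (Fin n → Fin q → ℝ) → Fin q → Fin n)
    (b : Fin n → Fin q → ℝ) (i : Fin n) : ℝ :=
  ∑ j ∈ fpaN W b i, b i j

/-- Liquid welfare of a bid profile in FPA. -/
def fpaLW {n q : ℕ} (B : Fin n → ℝ) (v : Fin n → Fin q → ℝ)
    (W : (Fin n → Fin q → ℝ) → Fin q → Fin n) (b : Fin n → Fin q → ℝ) : ℝ :=
  ∑ i, min (B i) (fpaV v W b i)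

/-- Equilibrium of a first-price auction with ROS and budget constraints:
bids are nonnegative, each bidder satisfies their constraints, and for any deviation
of a single bidder, either the bidder's value does not increase, or a constraint is violated. -/
def IsFpaEq {n q : ℕ} (B : Fin n → ℝ) (v : Fin n → Fin q → ℝ)
    (W : (Fin n → Fin q → ℝ) → Fin q → Fin n) (b : Fin n → Fin q → ℝ) : Prop :=
  (∀ i j, 0 ≤ b i j) ∧
  (∀ i, fpaSpendI W b i ≤ min (B i) (fpaV v W b i)) ∧
  (∀ i (b' : Fin q → ℝ), (∀ j, 0 ≤ b' j) →
    (∑ j ∈ fpaN W (Function.update b i b') i, v i j ≤ fpaV v W b i) ∨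
    (min (B i) (∑ j ∈ fpaN W (Function.update b i b') i, v i j)
      < ∑ j ∈ fpaN W (Function.update b i b') i, b' j))

/-- for every `n ≥ 1` there exist an instance with `n` bidders, a deterministic
tie-breaking rule and an FPA equilibrium whose liquid welfare `LW` satisfies `n * LW ≤ OPT`. -/
theorem stmt1 (n : ℕ) (hn : 1 ≤ n) :
    ∃ (q : ℕ) (B : Fin n → ℝ) (v : Fin n → Fin q → ℝ)
      (W : (Fin n → Fin q → ℝ) → Fin q → Fin n) (b : Fin n → Fin q → ℝ) (OPT : ℝ),
      (∀ i, 0 < B i) ∧ (∀ i j, 0 ≤ v i j) ∧ IsWinnerRule W ∧ IsFpaEq B v W b ∧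
      IsGreatest {w : ℝ | ∃ π : Fin n → Fin q → ℝ, IsAlloc π ∧ w = allocLW B v π} OPT ∧
      (n : ℝ) * fpaLW B v W b ≤ OPT := by
  have hn0 : 0 < n := hn
  have hnR : (1:ℝ) ≤ (n:ℝ) := by exact_mod_cast hn
  have hnR0 : (0:ℝ) < (n:ℝ) := by exact_mod_cast hn0
  set i0 : Fin n := ⟨0, hn0⟩ with hi0
  have hne : ∀ (c : Fin n → Fin 1 → ℝ) (j : Fin 1),
      (Finset.univ.filter fun i => ∀ k, c k j ≤ c i j).Nonempty := by
    intro c j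
    obtain ⟨m, hm, hmax⟩ := Finset.exists_max_image Finset.univ (fun i => c i j)
      ⟨i0, Finset.mem_univ i0⟩
    refine ⟨m, ?_⟩
    simp only [Finset.mem_filter, Finset.mem_univ, true_and]
    exact fun k => hmax k (Finset.mem_univ k)
  set W : (Fin n → Fin 1 → ℝ) → Fin 1 → Fin n :=
    fun c j => (Finset.univ.filter fun i => ∀ k, c k j ≤ c i j).min' (hne c j) with hWdef
  have hWmem : IsWinnerRule W := by
    intro c j k
    have h := Finset.min'_mem _ (hne c j)
    simp only [Finset.mem_filter] at h
    exact h.2 k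
  have hW0 : ∀ (c : Fin n → Fin 1 → ℝ) (j : Fin 1), (∀ k, c k j ≤ c i0 j) → W c j = i0 := by
    intro c j h
    have h1 : i0 ∈ Finset.univ.filter fun i => ∀ k, c k j ≤ c i j := by
      simp only [Finset.mem_filter, Finset.mem_univ, true_and]; exact h
    have h2 := Finset.min'_le _ _ h1
    have h3 : i0 ≤ W c j := by simp only [hi0, Fin.le_def]; exact Nat.zero_le _
    exact le_antisymm h2 h3
  set B : Fin n → ℝ := fun _ => 1 with hB
  set v : Fin n → Fin 1 → ℝ := fun _ _ => (n:ℝ) with hv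
  set b : Fin n → Fin 1 → ℝ := fun _ _ => 1 with hb
  have hWb : W b 0 = i0 := hW0 b 0 (fun k => le_refl 1)
  have hNb : ∀ i, fpaN W b i = if i = i0 then {(0:Fin 1)} else (∅ : Finset (Fin 1)) := by
    intro i
    unfold fpaN
    ext j
    fin_cases j
    simp only [Finset.mem_filter, Finset.mem_univ, true_and, Fin.zero_eta, hWb]
    constructor
    · intro h'; rw [if_pos h'.symm]; exact Finset.mem_singleton_self _
    · intro h'
      by_contra hne'
      rw [if_neg (fun h => hne' h.symm)] at h'
      exact absurd h' (Finset.notMem_empty _)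
  have hVb : ∀ i, fpaV v W b i = if i = i0 then (n:ℝ) else 0 := by
    intro i
    unfold fpaV
    rw [hNb]
    split_ifs <;> simp [hv]
  refine ⟨1, B, v, W, b, n, fun _ => one_pos, fun _ _ => le_of_lt hnR0, hWmem, ?_, ?_, ?_⟩
  · -- equilibrium
    refine ⟨fun _ _ => zero_le_one, ?_, ?_⟩
    · intro i
      unfold fpaSpendI
      rw [hNb, hVb]
      split_ifs with h
      · simp [hB, hnR, hb]
      · simp [hB]
    · intro i b' hb'
      set c := Function.update b i b' with hc
      by_cases hWc : W c 0 = i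
      · -- i wins under deviation
        have hS : fpaN W c i = {(0:Fin 1)} := by
          unfold fpaN; ext j; fin_cases j; simp [hWc]
        by_cases hii0 : i = i0
        · left
          rw [hS, hVb, if_pos hii0]
          simp [hv]
        · -- i ≠ i0 must overbid
          have hc0 : ∀ k, k ≠ i → c k 0 = 1 := by
            intro k hk; rw [hc, Function.update_of_ne hk]
          have hb'1 : 1 < b' 0 := by
            by_contra hle
            push_neg at hle
            have hW' : W c 0 = i0 := by
              apply hW0
              intro k
              have hci0 : c i0 0 = 1 := by
                rw [hc, Function.update_of_ne (Ne.symm hii0)]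
              rw [hci0]
              rcases eq_or_ne k i with h | hk
              · rw [h, hc, Function.update_self]; exact hle
              · rw [hc, Function.update_of_ne hk]
            rw [hWc] at hW'
            exact hii0 hW'
          right
          rw [hS]
          simp only [Finset.sum_singleton, hv, hB]
          calc min 1 (n:ℝ) = 1 := min_eq_left hnR
          _ < b' 0 := hb'1
      · -- i loses under deviation
        left
        have hS : fpaN W c i = (∅ : Finset (Fin 1)) := by
          unfold fpaN; ext j; fin_cases j; simp [hWc]
        rw [hS, hVb]
        split_ifs with h
        · simp [hnR0.le]
        · simp
  · -- IsGreatest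
    constructor
    · refine ⟨fun _ _ => (n:ℝ)⁻¹, ⟨fun _ _ => by positivity, fun _ _ => ?_, fun j => ?_⟩, ?_⟩
      · exact inv_le_one_of_one_le₀ hnR
      · simp [Finset.card_univ]
        rw [mul_inv_cancel₀ hnR0.ne']
      · unfold allocLW
        simp only [hv, hB, Fin.sum_univ_one]
        rw [inv_mul_cancel₀ hnR0.ne']
        simp [Finset.card_univ]
    · rintro w ⟨π, hπ, rfl⟩
      unfold allocLW
      calc ∑ i, min (B i) (∑ j, π i j * v i j) ≤ ∑ _i : Fin n, (1:ℝ) := by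
            apply Finset.sum_le_sum
            intro i _
            exact min_le_left _ _
      _ = n := by simp [Finset.card_univ]
  · -- final inequality
    unfold fpaLW
    have : ∑ i, min (B i) (fpaV v W b i) = 1 := by
      have h1 : ∀ i, min (B i) (fpaV v W b i) = if i = i0 then (1:ℝ) else 0 := by
        intro i
        rw [hVb, hB]
        split_ifs with h
        · exact min_eq_left hnR
        · simp
      rw [Finset.sum_congr rfl (fun i _ => h1 i)]
      simp
    rw [this, mul_one]
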